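/- In the free group F on two generators a and b, let N denote the normal closure of the singleton {b} (the smallest normal subgroup containing b). Then: (1) N is not a finitely generated group; (2) N is nonabelian; and (3) the abelianization of N is not finitely generated (equivalently, ℚ ⊗ N_ab is a ℚ-vector space of infinite rank). -/

import Mathlib

open SemidirectProduct Finsupp

noncomputable section

def φ : Multiplicative ℤ →* MulAut (Multiplicative (ℤ →₀ ℤ)) where
  toFun n := AddEquiv.toMultiplicative (Finsupp.domCongr (Equiv.addLeft n.toAdd))
  map_one' := by
    ext f : 1
    apply Multiplicative.toAdd.injective
    ext x
    simp [Finsupp.domCongr_apply, equivMapDomain_apply]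
    rfl
  map_mul' m n := by
    ext f : 1
    apply Multiplicative.toAdd.injective
    ext x
    simp [Finsupp.domCongr_apply, equivMapDomain_apply, MulAut.mul_apply,
      show ∀ a b : ℤ, (Equiv.addLeft a * Equiv.addLeft b : Equiv.Perm ℤ).symm =
        ((Equiv.addLeft b).trans (Equiv.addLeft a)).symm from fun _ _ => rfl,
      Equiv.symm_trans_apply, neg_add]

example (n : ℤ) (d : ℤ →₀ ℤ) : (φ (Multiplicative.ofAdd n)) (Multiplicative.ofAdd d) =
    Multiplicative.ofAdd (Finsupp.equivMapDomain (Equiv.addLeft n) d) := rfl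

abbrev A := Multiplicative (ℤ →₀ ℤ)

abbrev G := A ⋊[φ] Multiplicative ℤ

def f : FreeGroup Bool →* G :=
  FreeGroup.lift (fun x => if x then inr (Multiplicative.ofAdd (1:ℤ))
    else inl (Multiplicative.ofAdd (Finsupp.single (0:ℤ) (1:ℤ))))

abbrev N : Subgroup (FreeGroup Bool) := Subgroup.normalClosure {FreeGroup.of false}

lemma hker : ∀ x ∈ N, rightHom (f x) = 1 := by
  intro x hx
  have : N ≤ ((rightHom : G →* Multiplicative ℤ).comp f).ker := by
    apply Subgroup.normalClosure_le_normal
    intro y hy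
    rcases hy with rfl
    simp [MonoidHom.mem_ker, f, FreeGroup.lift_apply_of]
  exact this hx

instance : (N : Subgroup (FreeGroup Bool)).Normal := Subgroup.normalClosure_normal

lemma hb : FreeGroup.of false ∈ N := Subgroup.subset_normalClosure rfl

def ψ : N →* A where
  toFun x := (f x.1).left
  map_one' := by simp
  map_mul' x y := by
    have hx : (f x.1).right = 1 := hker x.1 x.2
    show (f (x.1 * y.1)).left = _
    rw [map_mul, SemidirectProduct.mul_left, hx, map_one]
    rfl

lemma f_conj (n : ℤ) :
    f ((FreeGroup.of true)^n * FreeGroup.of false * ((FreeGroup.of true)^n)⁻¹) =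
      inl (Multiplicative.ofAdd (Finsupp.single n (1:ℤ))) := by
  have h1 : f ((FreeGroup.of true)^n) = inr (Multiplicative.ofAdd (1:ℤ) ^ n) := by
    rw [map_zpow, ← map_zpow]
    simp [f, FreeGroup.lift_apply_of]
  rw [map_mul, map_mul, map_inv, h1]
  have h2 : f (FreeGroup.of false) = inl (Multiplicative.ofAdd (Finsupp.single (0:ℤ) (1:ℤ))) := by
    simp [f, FreeGroup.lift_apply_of]
  rw [h2, show ((inr (Multiplicative.ofAdd (1:ℤ) ^ n) : G))⁻¹
    = inr ((Multiplicative.ofAdd (1:ℤ) ^ n)⁻¹) from (map_inv inr _).symm,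
    ← SemidirectProduct.inl_aut]
  congr 1
  show Multiplicative.ofAdd (Finsupp.equivMapDomain (Equiv.addLeft
    (Multiplicative.toAdd (Multiplicative.ofAdd (1:ℤ) ^ n))) (Finsupp.single 0 1)) = _
  rw [Finsupp.equivMapDomain_single]
  congr 2
  show Multiplicative.toAdd (Multiplicative.ofAdd (1:ℤ) ^ n) + 0 = n
  simp

lemma conj_mem (n : ℤ) :
    (FreeGroup.of true)^n * FreeGroup.of false * ((FreeGroup.of true)^n)⁻¹ ∈ N :=
  Subgroup.Normal.conj_mem inferInstance _ hb _

lemma ψ_surj : Function.Surjective ψ := by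
  have key : ∀ d : ℤ →₀ ℤ, Multiplicative.ofAdd d ∈ ψ.range := by
    intro d
    induction d using Finsupp.induction with
    | zero => exact ⟨1, map_one ψ⟩
    | single_add a b rest _ _ ih =>
        have hsingle : Multiplicative.ofAdd (Finsupp.single a b) ∈ ψ.range := by
          refine ⟨(⟨_, conj_mem a⟩ : N) ^ b, ?_⟩
          rw [map_zpow]
          have : ψ ⟨_, conj_mem a⟩ = Multiplicative.ofAdd (Finsupp.single a (1:ℤ)) := by
            show (f _).left = _
            rw [f_conj]
            rfl
          rw [this, ← ofAdd_zsmul, Finsupp.smul_single, smul_eq_mul, mul_one]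
        have : Multiplicative.ofAdd (Finsupp.single a b + rest)
            = Multiplicative.ofAdd (Finsupp.single a b) * Multiplicative.ofAdd rest := rfl
        rw [this]
        exact mul_mem hsingle ih
  intro a
  obtain ⟨x, hx⟩ := key (Multiplicative.toAdd a)
  exact ⟨x, by simpa using hx⟩

lemma notFG_A : ¬ Group.FG A := by
  rw [← AddGroup.fg_iff_mul_fg]
  intro h
  obtain ⟨S, hS, hSfin⟩ := AddGroup.fg_iff.mp h
  set K : Set ℤ := ⋃ s ∈ S, (s.support : Set ℤ) with hK
  have hKfin : K.Finite := hSfin.biUnion (fun s _ => (s.support).finite_toSet)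
  have hle : AddSubgroup.closure S ≤ (Finsupp.supported ℤ ℤ K).toAddSubgroup := by
    rw [AddSubgroup.closure_le]
    intro s hs
    show s ∈ Finsupp.supported ℤ ℤ K
    rw [Finsupp.mem_supported]
    exact Set.subset_biUnion_of_mem (u := fun s => ((s.support : Finset ℤ) : Set ℤ)) hs
  obtain ⟨m, hm⟩ := hKfin.infinite_compl.nonempty
  have hmem : Finsupp.single m (1:ℤ) ∈ (Finsupp.supported ℤ ℤ K).toAddSubgroup := by
    apply hle
    rw [hS]
    trivial
  have hsub : ((Finsupp.single m (1:ℤ)).support : Set ℤ) ⊆ K :=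
    Finsupp.mem_supported ℤ _ |>.mp hmem
  rw [Finsupp.support_single_ne_zero m one_ne_zero] at hsub
  exact hm (hsub (by simp))

def g : FreeGroup Bool →* Equiv.Perm (Fin 3) :=
  FreeGroup.lift (fun x => if x then finRotate 3 else Equiv.swap 0 1)

theorem stmt6 :
    ¬ Group.FG ↥(Subgroup.normalClosure ({FreeGroup.of false} : Set (FreeGroup Bool))) ∧
    (∃ x y : ↥(Subgroup.normalClosure ({FreeGroup.of false} : Set (FreeGroup Bool))),
      x * y ≠ y * x) ∧
    ¬ Group.FG
      (Abelianization
        ↥(Subgroup.normalClosure ({FreeGroup.of false} : Set (FreeGroup Bool)))) := by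
  refine ⟨?_, ?_, ?_⟩
  · intro h
    exact notFG_A (@Group.fg_of_surjective _ _ _ _ h ψ ψ_surj)
  · refine ⟨⟨FreeGroup.of false, hb⟩,
      ⟨FreeGroup.of true * FreeGroup.of false * (FreeGroup.of true)⁻¹,
        Subgroup.Normal.conj_mem inferInstance _ hb _⟩, ?_⟩
    intro h
    have h2 : FreeGroup.of false * (FreeGroup.of true * FreeGroup.of false * (FreeGroup.of true)⁻¹)
        = FreeGroup.of true * FreeGroup.of false * (FreeGroup.of true)⁻¹ * FreeGroup.of false :=
      congrArg Subtype.val h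
    have h3 := congrArg g h2
    simp only [map_mul, map_inv, g, FreeGroup.lift_apply_of, if_true, if_false] at h3
    revert h3
    decide
  · intro h
    have hsurj : Function.Surjective (Abelianization.lift ψ) := by
      intro a
      obtain ⟨x, hx⟩ := ψ_surj a
      exact ⟨Abelianization.of x, by simpa using hx⟩
    exact notFG_A (@Group.fg_of_surjective _ _ _ _ h _ hsurj)
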